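/- Let n ≥ 2, a > 0, w ≥ 0, σ > 0, and define β₁ = (w + (1 + 1/n)a)/(2a + w). If (2n-1)·(n(a+w)+a)/((n-1)a) < e^{(2a+w)σ}, then β₁·(1 + (2n-1)e^{-(2a+w)σ}) < 1. -/

import Mathlib

theorem exp_decay_condition (n : ℕ) (hn : 2 ≤ n) (a w σ : ℝ)
    (ha : 0 < a) (hw : 0 ≤ w) (hσ : 0 < σ)
    (h : (2 * (n : ℝ) - 1) * ((n : ℝ) * (a + w) + a) / (((n : ℝ) - 1) * a)
          < Real.exp ((2 * a + w) * σ)) :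
    (w + (1 + 1 / (n : ℝ)) * a) / (2 * a + w)
      * (1 + (2 * (n : ℝ) - 1) * Real.exp (-((2 * a + w) * σ))) < 1 := by
  have hnR : (2:ℝ) ≤ (n:ℝ) := by exact_mod_cast hn
  have hn0 : (0:ℝ) < (n:ℝ) := by linarith
  have hn1 : (0:ℝ) < (n:ℝ) - 1 := by linarith
  have hD : (0:ℝ) < 2 * a + w := by linarith
  have hE : (0:ℝ) < Real.exp (-((2 * a + w) * σ)) := Real.exp_pos _
  have hEe : Real.exp ((2 * a + w) * σ) * Real.exp (-((2 * a + w) * σ)) = 1 := by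
    rw [← Real.exp_add]; ring_nf; exact Real.exp_zero
  have hM : (0:ℝ) < (n:ℝ) * (a + w) + a := by positivity
  have h2n : (0:ℝ) < 2 * (n:ℝ) - 1 := by linarith
  -- from h: (2n-1)(n(a+w)+a) < exp * (n-1) a
  have h1 : (2 * (n:ℝ) - 1) * ((n:ℝ) * (a + w) + a)
      < Real.exp ((2 * a + w) * σ) * (((n:ℝ) - 1) * a) := by
    rw [div_lt_iff₀ (by positivity)] at h; linarith
  -- multiply by E > 0
  have h2 : (2 * (n:ℝ) - 1) * ((n:ℝ) * (a + w) + a) * Real.exp (-((2 * a + w) * σ))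
      < ((n:ℝ) - 1) * a := by
    have := mul_lt_mul_of_pos_right h1 hE
    calc (2 * (n:ℝ) - 1) * ((n:ℝ) * (a + w) + a) * Real.exp (-((2 * a + w) * σ))
        < Real.exp ((2 * a + w) * σ) * (((n:ℝ) - 1) * a) * Real.exp (-((2 * a + w) * σ)) := this
      _ = Real.exp ((2 * a + w) * σ) * Real.exp (-((2 * a + w) * σ)) * (((n:ℝ) - 1) * a) := by ring
      _ = ((n:ℝ) - 1) * a := by rw [hEe]; ring
  rw [div_mul_eq_mul_div, div_lt_one hD]
  have hne : (n:ℝ) ≠ 0 := ne_of_gt hn0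
  field_simp
  rw [show a * 2 + w = 2 * a + w by ring]
  nlinarith [h2, hE, mul_nonneg hn0.le hw]
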